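/- Let ν be a measure on the Borel sets of ℝ, let ℋ : ℝ → ℝ be differentiable with |ℋ'(v)| ≤ c·|v| for all |v| ≤ R' (for some constants c, R' > 0), let A¹, A² ∈ L²(ν) be nonnegative, and let 𝐮¹, 𝐮² : ℝ → ℝ be ν-measurable with |𝐮ⁱ(x)| ≤ min(Aⁱ(x), R') for ν-a.e. x (i = 1,2) and 𝐮¹ − 𝐮² ∈ L²(ν). Then ∫ |ℋ(𝐮¹(x)) − ℋ(𝐮²(x))| ν(dx) ≤ c·‖A¹ + A²‖_{L²(ν)}·‖𝐮¹ − 𝐮²‖_{L²(ν)}. -/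

import Mathlib

open MeasureTheory

/-- Key Lipschitz estimate for the integral term `∫ ℋ(𝐮(x)) ν(dx)`:
if `|𝐮ⁱ| ≤ min(Aⁱ, R')` ν-a.e. with nonnegative `Aⁱ ∈ L²(ν)` and
`𝐮¹ − 𝐮² ∈ L²(ν)`, then
`∫ |ℋ(𝐮¹) − ℋ(𝐮²)| dν ≤ c·‖A¹ + A²‖_{L²(ν)}·‖𝐮¹ − 𝐮²‖_{L²(ν)}`. -/
theorem H_integral_lipschitz
    (ν : Measure ℝ)
    (H : ℝ → ℝ) (hH : Differentiable ℝ H)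
    (c R' : ℝ) (hc : 0 < c) (hR' : 0 < R')
    (hderiv : ∀ v : ℝ, |v| ≤ R' → |deriv H v| ≤ c * |v|)
    (A1 A2 : ℝ → ℝ) (hA1 : MemLp A1 2 ν) (hA2 : MemLp A2 2 ν)
    (hA1_nonneg : ∀ᵐ x ∂ν, 0 ≤ A1 x) (hA2_nonneg : ∀ᵐ x ∂ν, 0 ≤ A2 x)
    (u1 u2 : ℝ → ℝ) (hu1 : AEMeasurable u1 ν) (hu2 : AEMeasurable u2 ν)
    (hub1 : ∀ᵐ x ∂ν, |u1 x| ≤ min (A1 x) R')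
    (hub2 : ∀ᵐ x ∂ν, |u2 x| ≤ min (A2 x) R')
    (hdiff : MemLp (fun x => u1 x - u2 x) 2 ν) :
    ∫ x, |H (u1 x) - H (u2 x)| ∂ν ≤
      c * (eLpNorm (fun x => A1 x + A2 x) 2 ν).toReal *
        (eLpNorm (fun x => u1 x - u2 x) 2 ν).toReal := by
  have hAsum : MemLp (fun x => A1 x + A2 x) 2 ν := hA1.add hA2
  have habs : MemLp (fun x => |u1 x - u2 x|) 2 ν := by
    simpa [Real.norm_eq_abs] using hdiff.norm
  -- Lp representatives
  set F : Lp ℝ 2 ν := hAsum.toLp _ with hF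
  set G : Lp ℝ 2 ν := habs.toLp _ with hG
  -- pointwise (a.e.) bound from the mean value theorem
  have hpt : ∀ᵐ x ∂ν, |H (u1 x) - H (u2 x)| ≤ c * ((A1 x + A2 x) * |u1 x - u2 x|) := by
    filter_upwards [hA1_nonneg, hA2_nonneg, hub1, hub2] with x h1 h2 hb1 hb2
    set a := u1 x
    set b := u2 x
    have ha1 : |a| ≤ A1 x := hb1.trans (min_le_left _ _)
    have haR : |a| ≤ R' := hb1.trans (min_le_right _ _)
    have hb1' : |b| ≤ A2 x := hb2.trans (min_le_left _ _)
    have hbR : |b| ≤ R' := hb2.trans (min_le_right _ _)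
    set m := max |a| |b| with hm
    have hmR : m ≤ R' := max_le haR hbR
    have hmA : m ≤ A1 x + A2 x := by
      apply max_le
      · exact ha1.trans (le_add_of_nonneg_right h2)
      · exact hb1'.trans (le_add_of_nonneg_left h1)
    have key : ‖H a - H b‖ ≤ (c * (A1 x + A2 x)) * ‖a - b‖ := by
      refine Convex.norm_image_sub_le_of_norm_hasDerivWithin_le
        (f' := deriv H) (s := Set.Icc (-m) m)
        (fun v _ => (hH v).hasDerivAt.hasDerivWithinAt) (fun v hv => ?_)
        (convex_Icc _ _) ?_ ?_
      · have hvm : |v| ≤ m := abs_le.mpr ⟨hv.1, hv.2⟩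
        calc ‖deriv H v‖ = |deriv H v| := rfl
          _ ≤ c * |v| := hderiv v (hvm.trans hmR)
          _ ≤ c * (A1 x + A2 x) :=
            mul_le_mul_of_nonneg_left (hvm.trans hmA) hc.le
      · exact Set.mem_Icc.mpr (abs_le.mp (le_max_right |a| |b|))
      · exact Set.mem_Icc.mpr (abs_le.mp (le_max_left |a| |b|))
    calc |H a - H b| = ‖H a - H b‖ := (Real.norm_eq_abs _).symm
      _ ≤ (c * (A1 x + A2 x)) * ‖a - b‖ := key
      _ = c * ((A1 x + A2 x) * |a - b|) := by
          rw [Real.norm_eq_abs]; ring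
  -- integrability of the dominating function
  have hint0 : Integrable (fun x => (A1 x + A2 x) * |u1 x - u2 x|) ν := by
    have := MeasureTheory.L2.integrable_inner (𝕜 := ℝ) F G
    refine this.congr ?_
    filter_upwards [hAsum.coeFn_toLp, habs.coeFn_toLp] with x hx hy
    simp [hF, hG, hx, hy, RCLike.inner_apply, starRingEnd_apply, mul_comm]
  have hint : Integrable (fun x => c * ((A1 x + A2 x) * |u1 x - u2 x|)) ν :=
    hint0.const_mul c
  -- Cauchy–Schwarz
  have hCS : ∫ x, (A1 x + A2 x) * |u1 x - u2 x| ∂ν ≤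
      (eLpNorm (fun x => A1 x + A2 x) 2 ν).toReal *
        (eLpNorm (fun x => |u1 x - u2 x|) 2 ν).toReal := by
    have hinner : ∫ x, (A1 x + A2 x) * |u1 x - u2 x| ∂ν = (inner ℝ F G : ℝ) := by
      rw [MeasureTheory.L2.inner_def]
      refine integral_congr_ae ?_
      filter_upwards [hAsum.coeFn_toLp, habs.coeFn_toLp] with x hx hy
      simp [hF, hG, hx, hy, RCLike.inner_apply, starRingEnd_apply, mul_comm]
    rw [hinner]
    calc (inner ℝ F G : ℝ) ≤ ‖F‖ * ‖G‖ := real_inner_le_norm F G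
      _ = _ := by rw [hF, hG, Lp.norm_toLp _ hAsum, Lp.norm_toLp _ habs]
  have habs_eq : eLpNorm (fun x => |u1 x - u2 x|) 2 ν
      = eLpNorm (fun x => u1 x - u2 x) 2 ν := by
    simpa [Real.norm_eq_abs] using
      eLpNorm_norm (p := 2) (μ := ν) (fun x => u1 x - u2 x)
  calc ∫ x, |H (u1 x) - H (u2 x)| ∂ν
      ≤ ∫ x, c * ((A1 x + A2 x) * |u1 x - u2 x|) ∂ν :=
        integral_mono_of_nonneg (Filter.Eventually.of_forall fun x => abs_nonneg _) hint hpt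
    _ = c * ∫ x, (A1 x + A2 x) * |u1 x - u2 x| ∂ν := integral_const_mul c _
    _ ≤ c * ((eLpNorm (fun x => A1 x + A2 x) 2 ν).toReal *
          (eLpNorm (fun x => |u1 x - u2 x|) 2 ν).toReal) :=
        mul_le_mul_of_nonneg_left hCS hc.le
    _ = _ := by rw [habs_eq]; ring
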